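/- Let (Z,μ) be a probability space. Let σ : Z → ℕ be measurable with σ(z) ≥ 1 for all z and μ(σ > n) ≤ C₁ e^{−dn} for all n ≥ 1, where C₁, d > 0. For each j ∈ ℕ let τ_j : Z → [0,∞) be measurable with μ(τ_j > t) ≤ C₂ t^{−β₀} for all t ≥ 1 and all j, where C₂ > 0 and β₀ > 0. Define φ(z) = Σ_{j=0}^{σ(z)−1} τ_j(z). Then for every γ ∈ (0, β₀), ∫_Z σ φ^{γ} dμ < ∞. -/

import Mathlib

open MeasureTheory
open scoped ENNReal


-- L3: layer cake discrete
lemma aux_ofReal_le (x : ℝ) :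
    ENNReal.ofReal x ≤ 1 + ∑' m : ℕ, (if ((m : ℝ) + 1 < x) then (1:ℝ≥0∞) else 0) := by
  rcases le_or_gt x 1 with h | h
  · calc ENNReal.ofReal x ≤ 1 := by
          simpa using ENNReal.ofReal_le_ofReal h
      _ ≤ _ := le_add_right le_rfl
  · set k := ⌈x⌉₊ - 1 with hk
    have hx0 : 0 ≤ x := by linarith
    have hk1 : k + 1 = ⌈x⌉₊ := by
      have : 1 ≤ ⌈x⌉₊ := Nat.one_le_ceil_iff.mpr (by linarith)
      omega
    have hkx : (k : ℝ) < x := by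
      have h2 := Nat.ceil_lt_add_one hx0
      have : (k : ℝ) = (⌈x⌉₊ : ℝ) - 1 := by
        rw [← hk1]; push_cast; ring
      linarith
    have hsum : (k : ℝ≥0∞) ≤ ∑' m : ℕ, (if ((m : ℝ) + 1 < x) then (1:ℝ≥0∞) else 0) := by
      calc (k : ℝ≥0∞) = ∑ m ∈ Finset.range k, (if ((m : ℝ) + 1 < x) then (1:ℝ≥0∞) else 0) := by
            rw [Finset.sum_ite_of_true (fun m hm => ?_), Finset.sum_const, Finset.card_range]
            · simp
            have : (m : ℝ) + 1 ≤ (k : ℝ) := by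
              have := Finset.mem_range.mp hm
              exact_mod_cast Nat.succ_le_of_lt this
            linarith
        _ ≤ _ := ENNReal.sum_le_tsum _
    calc ENNReal.ofReal x ≤ (⌈x⌉₊ : ℝ≥0∞) := by
          rw [← ENNReal.ofReal_natCast]
          exact ENNReal.ofReal_le_ofReal (Nat.le_ceil x)
      _ = 1 + (k : ℝ≥0∞) := by rw [← hk1]; push_cast; ring
      _ ≤ _ := add_le_add_right hsum 1

-- Lsum : (∑ a)^γ ≤ n^γ ∑ a^γ
lemma aux_sum_rpow {γ : ℝ} (hγ : 0 < γ) (n : ℕ) (a : ℕ → ℝ) (ha : ∀ j, 0 ≤ a j) :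
    (∑ j ∈ Finset.range n, a j) ^ γ ≤ (n : ℝ) ^ γ * ∑ j ∈ Finset.range n, a j ^ γ := by
  rcases Nat.eq_zero_or_pos n with rfl | hn
  · simp [Real.zero_rpow hγ.ne']
  · obtain ⟨j₀, hj₀, hmax⟩ := Finset.exists_max_image (Finset.range n) a
      ⟨0, Finset.mem_range.mpr hn⟩
    have h1 : ∑ j ∈ Finset.range n, a j ≤ (n : ℝ) * a j₀ := by
      calc ∑ j ∈ Finset.range n, a j ≤ ∑ j ∈ Finset.range n, a j₀ :=
            Finset.sum_le_sum fun j hj => hmax j hj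
        _ = (n : ℝ) * a j₀ := by simp [mul_comm]
    have h2 : (∑ j ∈ Finset.range n, a j) ^ γ ≤ ((n : ℝ) * a j₀) ^ γ :=
      Real.rpow_le_rpow (Finset.sum_nonneg fun j _ => ha j) h1 hγ.le
    have h3 : ((n : ℝ) * a j₀) ^ γ = (n : ℝ) ^ γ * a j₀ ^ γ :=
      Real.mul_rpow (Nat.cast_nonneg n) (ha j₀)
    have h4 : a j₀ ^ γ ≤ ∑ j ∈ Finset.range n, a j ^ γ :=
      Finset.single_le_sum (fun j _ => Real.rpow_nonneg (ha j) γ) hj₀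
    calc (∑ j ∈ Finset.range n, a j) ^ γ ≤ (n : ℝ) ^ γ * a j₀ ^ γ := by rw [← h3]; exact h2
      _ ≤ (n : ℝ) ^ γ * ∑ j ∈ Finset.range n, a j ^ γ :=
          mul_le_mul_of_nonneg_left h4 (Real.rpow_nonneg (Nat.cast_nonneg n) γ)

theorem stmt13 {Z : Type*} [MeasurableSpace Z] (μ : Measure Z) [IsProbabilityMeasure μ]
    (σ : Z → ℕ) (hσmeas : Measurable σ) (hσ1 : ∀ z, 1 ≤ σ z)
    (C₁ d : ℝ) (hC₁ : 0 < C₁) (hd : 0 < d)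
    (hσtail : ∀ n : ℕ, 1 ≤ n →
      μ {z | n < σ z} ≤ ENNReal.ofReal (C₁ * Real.exp (-d * n)))
    (τ : ℕ → Z → ℝ) (hτmeas : ∀ j, Measurable (τ j)) (hτ0 : ∀ j z, 0 ≤ τ j z)
    (C₂ β₀ : ℝ) (hC₂ : 0 < C₂) (hβ₀ : 0 < β₀)
    (hτtail : ∀ j : ℕ, ∀ t : ℝ, 1 ≤ t →
      μ {z | t < τ j z} ≤ ENNReal.ofReal (C₂ * t ^ (-β₀)))
    (γ : ℝ) (hγ : γ ∈ Set.Ioo 0 β₀) :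
    ∫⁻ z, ENNReal.ofReal ((σ z : ℝ) * (∑ j ∈ Finset.range (σ z), τ j z) ^ γ) ∂μ < ⊤ := by
  obtain ⟨hγ0, hγβ⟩ := hγ
  set K : ℝ := C₁ + 1 with hKdef
  set θ : ℝ := (β₀ - γ) / (2 * β₀) with hθdef
  set r : ℝ := (β₀ + γ) / (2 * γ) with hrdef
  have hθ0 : 0 < θ := div_pos (by linarith) (by linarith)
  have hθ1 : θ < 1 := by
    rw [hθdef, div_lt_one (by linarith)]; linarith
  have hr1 : 1 < r := by
    rw [hrdef, lt_div_iff₀ (by linarith)]; linarith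
  have hK1 : (1:ℝ) ≤ K := by simp [hKdef]; linarith
  have hK0 : (0:ℝ) < K := by linarith
  -- uniform tail for σ
  have htail : ∀ n : ℕ, μ {z | n < σ z} ≤ ENNReal.ofReal (K * Real.exp (-d * n)) := by
    intro n
    rcases Nat.eq_zero_or_pos n with rfl | hn
    · calc μ {z | 0 < σ z} ≤ 1 := prob_le_one
        _ ≤ ENNReal.ofReal (K * Real.exp (-d * (0:ℕ))) := by
            simp only [Nat.cast_zero, mul_zero, Real.exp_zero, mul_one]
            rw [← ENNReal.ofReal_one]
            exact ENNReal.ofReal_le_ofReal hK1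
    · exact (hσtail n hn).trans (ENNReal.ofReal_le_ofReal
        (mul_le_mul_of_nonneg_right (by linarith) (Real.exp_pos _).le))
  -- summability of (m+1)^(-r)
  have hSr : Summable (fun m : ℕ => ((m:ℝ) + 1) ^ (-r)) := by
    have h0 : Summable (fun n : ℕ => 1 / (n:ℝ) ^ r) :=
      Real.summable_one_div_nat_rpow.mpr hr1
    have h1 := (summable_nat_add_iff 1).mpr h0
    refine h1.congr fun m => ?_
    rw [Real.rpow_neg (by positivity), one_div]
    push_cast
    ring_nf
  set Sr : ℝ := ∑' m : ℕ, ((m:ℝ) + 1) ^ (-r) with hSrdef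
  have hSr0 : 0 ≤ Sr := tsum_nonneg fun m => Real.rpow_nonneg (by positivity) _
  set q : ℝ := Real.exp (-(d * θ)) with hqdef
  have hq0 : 0 < q := Real.exp_pos _
  have hq1 : q < 1 := Real.exp_lt_one_iff.mpr (by nlinarith)
  set B : ℝ := K + K ^ θ * C₂ ^ (1 - θ) * Sr with hBdef
  have hB0 : 0 < B := by
    have : 0 ≤ K ^ θ * C₂ ^ (1 - θ) * Sr := by positivity
    linarith
  -- the key estimate for each (n, j)
  have Jkey : ∀ n j : ℕ,
      ∫⁻ z in {z | σ z = n + 1}, ENNReal.ofReal (τ j z ^ γ) ∂μ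
        ≤ ENNReal.ofReal (B * q ^ n) := by
    intro n j
    set S := {z | σ z = n + 1} with hSdef
    have hSmeas : MeasurableSet S := hσmeas (measurableSet_singleton (n+1))
    set t : ℕ → ℝ := fun m => ((m:ℝ) + 1) ^ γ⁻¹ with htdef
    have ht1 : ∀ m, 1 ≤ t m := fun m =>
      Real.one_le_rpow (by push_cast; linarith) (by positivity)
    have hTmeas : ∀ m : ℕ, MeasurableSet {z | t m < τ j z} := fun m =>
      measurableSet_lt measurable_const (hτmeas j)
    have step1 : ∫⁻ z in S, ENNReal.ofReal (τ j z ^ γ) ∂μ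
        ≤ ∫⁻ z in S, (1 + ∑' m : ℕ,
            Set.indicator {z | t m < τ j z} (fun _ => (1:ℝ≥0∞)) z) ∂μ := by
      refine lintegral_mono fun z => ?_
      refine (aux_ofReal_le _).trans (le_of_eq ?_)
      congr 1
      refine tsum_congr fun m => ?_
      have hiff : ((m:ℝ) + 1 < τ j z ^ γ) ↔ (t m < τ j z) :=
        (Real.rpow_inv_lt_iff_of_pos (by positivity) (hτ0 j z) hγ0).symm
      rw [Set.indicator_apply]
      simp only [Set.mem_setOf_eq, hiff]
    have step2 : ∫⁻ z in S, (1 + ∑' m : ℕ,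
          Set.indicator {z | t m < τ j z} (fun _ => (1:ℝ≥0∞)) z) ∂μ
        = μ S + ∑' m : ℕ, μ ({z | t m < τ j z} ∩ S) := by
      rw [lintegral_add_left measurable_const, setLIntegral_one,
        lintegral_tsum fun m =>
          ((measurable_const.indicator (hTmeas m)).aemeasurable)]
      congr 1
      refine tsum_congr fun m => ?_
      rw [show ({z | t m < τ j z}.indicator (fun _ => (1:ℝ≥0∞)))
          = ({z | t m < τ j z}.indicator (1 : Z → ℝ≥0∞)) from rfl,
        lintegral_indicator_one (hTmeas m), Measure.restrict_apply (hTmeas m)]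
    -- bound each tail term
    have hSsub : S ⊆ {z | (n:ℕ) < σ z} := fun z hz => by
      simp only [hSdef, Set.mem_setOf_eq] at hz ⊢; omega
    have hμS : μ S ≤ ENNReal.ofReal (K * Real.exp (-d * n)) :=
      (measure_mono hSsub).trans (htail n)
    have hterm : ∀ m : ℕ, μ ({z | t m < τ j z} ∩ S)
        ≤ ENNReal.ofReal ((K ^ θ * C₂ ^ (1 - θ) * q ^ n) * ((m:ℝ) + 1) ^ (-r)) := by
      intro m
      have ha : μ ({z | t m < τ j z} ∩ S) ≤ ENNReal.ofReal (K * Real.exp (-d * n)) :=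
        (measure_mono Set.inter_subset_right).trans hμS
      have hb : μ ({z | t m < τ j z} ∩ S) ≤ ENNReal.ofReal (C₂ * t m ^ (-β₀)) :=
        (measure_mono Set.inter_subset_left).trans (hτtail j (t m) (ht1 m))
      have hsplit : μ ({z | t m < τ j z} ∩ S)
          = μ ({z | t m < τ j z} ∩ S) ^ θ * μ ({z | t m < τ j z} ∩ S) ^ (1 - θ) := by
        rw [← ENNReal.rpow_add_of_nonneg θ (1-θ) hθ0.le (by linarith)]
        simp
      calc μ ({z | t m < τ j z} ∩ S)
          ≤ ENNReal.ofReal (K * Real.exp (-d * n)) ^ θ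
            * ENNReal.ofReal (C₂ * t m ^ (-β₀)) ^ (1 - θ) := by
            rw [hsplit]
            exact mul_le_mul' (ENNReal.rpow_le_rpow ha hθ0.le)
              (ENNReal.rpow_le_rpow hb (by linarith))
        _ = ENNReal.ofReal ((K * Real.exp (-d * n)) ^ θ
              * (C₂ * t m ^ (-β₀)) ^ (1 - θ)) := by
            rw [ENNReal.ofReal_rpow_of_nonneg (by positivity) hθ0.le,
              ENNReal.ofReal_rpow_of_nonneg (by positivity) (by linarith : (0:ℝ) ≤ 1 - θ),
              ← ENNReal.ofReal_mul (by positivity)]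
        _ = ENNReal.ofReal ((K ^ θ * C₂ ^ (1 - θ) * q ^ n) * ((m:ℝ) + 1) ^ (-r)) := by
            congr 1
            have e1 : (K * Real.exp (-d * n)) ^ θ = K ^ θ * q ^ n := by
              rw [Real.mul_rpow hK0.le (Real.exp_pos _).le, ← Real.exp_mul, hqdef,
                ← Real.exp_nat_mul]
              ring_nf
            have e2 : (C₂ * t m ^ (-β₀)) ^ (1 - θ) = C₂ ^ (1 - θ) * ((m:ℝ) + 1) ^ (-r) := by
              rw [Real.mul_rpow hC₂.le (Real.rpow_nonneg (Real.rpow_nonneg (by positivity) _) _)]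
              congr 1
              rw [← Real.rpow_mul (by positivity : (0:ℝ) ≤ (m:ℝ) + 1),
                ← Real.rpow_mul (by positivity : (0:ℝ) ≤ (m:ℝ) + 1)]
              congr 1
              rw [hθdef, hrdef]
              field_simp
              ring
            rw [e1, e2]; ring
    calc ∫⁻ z in S, ENNReal.ofReal (τ j z ^ γ) ∂μ
        ≤ μ S + ∑' m : ℕ, μ ({z | t m < τ j z} ∩ S) := step1.trans (le_of_eq step2)
      _ ≤ ENNReal.ofReal (K * Real.exp (-d * n))
          + ∑' m : ℕ, ENNReal.ofReal ((K ^ θ * C₂ ^ (1 - θ) * q ^ n) * ((m:ℝ) + 1) ^ (-r)) :=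
          add_le_add hμS (ENNReal.tsum_le_tsum hterm)
      _ = ENNReal.ofReal (K * Real.exp (-d * n))
          + ENNReal.ofReal ((K ^ θ * C₂ ^ (1 - θ) * q ^ n) * Sr) := by
          rw [← ENNReal.ofReal_tsum_of_nonneg (fun m => by positivity) (hSr.mul_left _),
            tsum_mul_left]
      _ ≤ ENNReal.ofReal (B * q ^ n) := by
          rw [← ENNReal.ofReal_add (by positivity) (by positivity)]
          apply ENNReal.ofReal_le_ofReal
          have h1 : Real.exp (-d * n) ≤ q ^ n := by
            rw [hqdef, ← Real.exp_nat_mul]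
            apply Real.exp_le_exp.mpr
            nlinarith [mul_nonneg (Nat.cast_nonneg n : (0:ℝ) ≤ n)
              (mul_nonneg hd.le (by linarith : (0:ℝ) ≤ 1 - θ))]
          have h2 : K * Real.exp (-d * n) ≤ K * q ^ n :=
            mul_le_mul_of_nonneg_left h1 hK0.le
          have h4 : K * q ^ n + K ^ θ * C₂ ^ (1 - θ) * q ^ n * Sr = B * q ^ n := by
            rw [hBdef]; ring
          nlinarith [h2, h4]
  -- handy: measurability of z ↦ ofReal (τ j z ^ γ)
  have hτγmeas : ∀ j : ℕ, Measurable fun z => ENNReal.ofReal (τ j z ^ γ) := fun j =>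
    ENNReal.measurable_ofReal.comp ((Real.continuous_rpow_const hγ0.le).measurable.comp (hτmeas j))
  -- the dominating functions
  set g : ℕ → Z → ℝ≥0∞ := fun n => Set.indicator {z | σ z = n + 1}
    (fun z => ENNReal.ofReal (((n:ℝ) + 1) ^ (1 + γ))
      * ∑ j ∈ Finset.range (n + 1), ENNReal.ofReal (τ j z ^ γ)) with hgdef
  have hgmeas : ∀ n, Measurable (g n) := fun n =>
    (measurable_const.mul (Finset.measurable_sum _ fun j _ => hτγmeas j)).indicator
      (hσmeas (measurableSet_singleton (n + 1)))
  -- pointwise bound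
  have hpt : ∀ z, ENNReal.ofReal ((σ z : ℝ) * (∑ j ∈ Finset.range (σ z), τ j z) ^ γ)
      ≤ ∑' n : ℕ, g n z := by
    intro z
    obtain ⟨n, hσz⟩ : ∃ n, σ z = n + 1 := ⟨σ z - 1, by have := hσ1 z; omega⟩
    have hmem : z ∈ {z' | σ z' = n + 1} := hσz
    have hval : g n z = ENNReal.ofReal (((n:ℝ) + 1) ^ (1 + γ))
        * ∑ j ∈ Finset.range (n + 1), ENNReal.ofReal (τ j z ^ γ) := by
      rw [hgdef]; exact Set.indicator_of_mem hmem _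
    have hcast : ((n:ℝ) + 1) = (σ z : ℝ) := by rw [hσz]; push_cast; ring
    have hreal : (σ z : ℝ) * (∑ j ∈ Finset.range (σ z), τ j z) ^ γ
        ≤ ((σ z : ℝ)) ^ (1 + γ) * ∑ j ∈ Finset.range (σ z), τ j z ^ γ := by
      have hpos : (0:ℝ) < (σ z : ℝ) := by exact_mod_cast hσ1 z
      have h1 := aux_sum_rpow hγ0 (σ z) (fun j => τ j z) (fun j => hτ0 j z)
      calc (σ z : ℝ) * (∑ j ∈ Finset.range (σ z), τ j z) ^ γ
          ≤ (σ z : ℝ) * ((σ z : ℝ) ^ γ * ∑ j ∈ Finset.range (σ z), τ j z ^ γ) :=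
            mul_le_mul_of_nonneg_left h1 hpos.le
        _ = ((σ z : ℝ)) ^ (1 + γ) * ∑ j ∈ Finset.range (σ z), τ j z ^ γ := by
            rw [Real.rpow_add hpos, Real.rpow_one]; ring
    calc ENNReal.ofReal ((σ z : ℝ) * (∑ j ∈ Finset.range (σ z), τ j z) ^ γ)
        ≤ ENNReal.ofReal (((σ z : ℝ)) ^ (1 + γ) * ∑ j ∈ Finset.range (σ z), τ j z ^ γ) :=
          ENNReal.ofReal_le_ofReal hreal
      _ = g n z := by
          rw [hval, hcast, ENNReal.ofReal_mul (Real.rpow_nonneg (Nat.cast_nonneg _) _),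
            ENNReal.ofReal_sum_of_nonneg (fun j _ => Real.rpow_nonneg (hτ0 j z) γ), hσz]
      _ ≤ ∑' n : ℕ, g n z := ENNReal.le_tsum n
  -- integral of g n
  have hgint : ∀ n : ℕ, ∫⁻ z, g n z ∂μ
      ≤ ENNReal.ofReal (((n:ℝ) + 1) ^ (2 + γ) * B * q ^ n) := by
    intro n
    have hSmeas : MeasurableSet {z | σ z = n + 1} := hσmeas (measurableSet_singleton (n + 1))
    rw [hgdef]
    rw [lintegral_indicator hSmeas]
    rw [lintegral_const_mul _ (Finset.measurable_sum _ fun j _ => hτγmeas j)]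
    rw [lintegral_finset_sum _ fun j _ => hτγmeas j]
    calc ENNReal.ofReal (((n:ℝ) + 1) ^ (1 + γ))
          * ∑ j ∈ Finset.range (n + 1), ∫⁻ z in {z | σ z = n + 1}, ENNReal.ofReal (τ j z ^ γ) ∂μ
        ≤ ENNReal.ofReal (((n:ℝ) + 1) ^ (1 + γ))
          * ∑ _j ∈ Finset.range (n + 1), ENNReal.ofReal (B * q ^ n) :=
          mul_le_mul_right (Finset.sum_le_sum fun j _ => Jkey n j) _
      _ = ENNReal.ofReal (((n:ℝ) + 1) ^ (1 + γ)) * (ENNReal.ofReal ((n:ℝ) + 1)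
          * ENNReal.ofReal (B * q ^ n)) := by
          rw [Finset.sum_const, Finset.card_range, nsmul_eq_mul]
          congr 1
          rw [← ENNReal.ofReal_natCast (n + 1)]
          norm_num
      _ = ENNReal.ofReal (((n:ℝ) + 1) ^ (2 + γ) * B * q ^ n) := by
          rw [← ENNReal.ofReal_mul (by positivity : (0:ℝ) ≤ (n:ℝ) + 1),
            ← ENNReal.ofReal_mul (by positivity)]
          congr 1
          have h5 : ((n:ℝ) + 1) ^ (2 + γ) = ((n:ℝ) + 1) ^ (1 + γ) * ((n:ℝ) + 1) := by
            rw [show (2:ℝ) + γ = (1 + γ) + 1 by ring, Real.rpow_add (by positivity),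
              Real.rpow_one]
          rw [h5]; ring
  -- summability of the bound
  have hq1' : ‖q‖ < 1 := by rw [Real.norm_eq_abs, abs_of_pos hq0]; exact hq1
  set k : ℕ := ⌈(2:ℝ) + γ⌉₊ with hkdef
  have hsum : Summable (fun n : ℕ => ((n:ℝ) + 1) ^ (2 + γ) * B * q ^ n) := by
    have h0 : Summable (fun n : ℕ => (n:ℝ) ^ k * q ^ n) :=
      summable_pow_mul_geometric_of_norm_lt_one k hq1'
    have h1 : Summable (fun n : ℕ => ((n + 1 : ℕ):ℝ) ^ k * q ^ (n + 1)) :=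
      (summable_nat_add_iff (f := fun n : ℕ => (n:ℝ) ^ k * q ^ n) 1).mpr h0
    have h2 : Summable (fun n : ℕ => (B / q) * (((n + 1 : ℕ):ℝ) ^ k * q ^ (n + 1))) :=
      h1.mul_left _
    refine h2.of_nonneg_of_le (fun n => by positivity) fun n => ?_
    have hb1 : ((n:ℝ) + 1) ^ (2 + γ) ≤ ((n:ℝ) + 1) ^ (k:ℝ) :=
      Real.rpow_le_rpow_of_exponent_le (by push_cast; linarith) (Nat.le_ceil _)
    have hb2 : ((n:ℝ) + 1) ^ ((k:ℕ):ℝ) = ((n:ℝ) + 1) ^ (k:ℕ) := Real.rpow_natCast _ k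
    calc ((n:ℝ) + 1) ^ (2 + γ) * B * q ^ n ≤ ((n:ℝ) + 1) ^ (k:ℕ) * B * q ^ n := by
          rw [← hb2]
          exact mul_le_mul_of_nonneg_right (mul_le_mul_of_nonneg_right hb1 hB0.le) (by positivity)
      _ = (B / q) * (((n + 1 : ℕ):ℝ) ^ k * q ^ (n + 1)) := by
          push_cast
          field_simp
          ring
  -- conclude
  calc ∫⁻ z, ENNReal.ofReal ((σ z : ℝ) * (∑ j ∈ Finset.range (σ z), τ j z) ^ γ) ∂μ
      ≤ ∫⁻ z, ∑' n : ℕ, g n z ∂μ := lintegral_mono hpt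
    _ = ∑' n : ℕ, ∫⁻ z, g n z ∂μ := lintegral_tsum fun n => (hgmeas n).aemeasurable
    _ ≤ ∑' n : ℕ, ENNReal.ofReal (((n:ℝ) + 1) ^ (2 + γ) * B * q ^ n) :=
        ENNReal.tsum_le_tsum hgint
    _ = ENNReal.ofReal (∑' n : ℕ, ((n:ℝ) + 1) ^ (2 + γ) * B * q ^ n) :=
        (ENNReal.ofReal_tsum_of_nonneg (fun n => by positivity) hsum).symm
    _ < ⊤ := ENNReal.ofReal_lt_top
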